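/- Let G be a simple graph with maximum degree Δ(G) ≤ r and let T be a tight clique of G of size t. Then k(G_T) ≥ k(G) + 2^{r+1} − 2^t · i(R_T) − φ(R_T), where the inequality is between integers. -/

import Mathlib

open Classical Finset

namespace Paper

variable {V : Type*}

/-- The number of cliques (vertex sets inducing complete subgraphs, including
the empty set and singletons) of a graph. -/
noncomputable def cliqueCount [Fintype V] (G : SimpleGraph V) : ℕ :=
  (Finset.univ.filter fun s : Finset V => G.IsClique (s : Set V)).card

/-- The number of cliques of size `t`. -/
noncomputable def cliqueCountSize [Fintype V] (G : SimpleGraph V) (t : ℕ) : ℕ :=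
  (Finset.univ.filter fun s : Finset V => G.IsClique (s : Set V) ∧ s.card = t).card

/-- A finset of vertices is independent if its vertices are pairwise nonadjacent. -/
def IsIndepFinset (G : SimpleGraph V) (s : Finset V) : Prop :=
  (s : Set V).Pairwise fun u v => ¬ G.Adj u v

/-- The number of independent sets (including the empty set) of a graph. -/
noncomputable def indepCount [Fintype V] (G : SimpleGraph V) : ℕ :=
  (Finset.univ.filter fun s : Finset V => IsIndepFinset G s).card

/-- The number of independent sets of size `t`. -/
noncomputable def indepCountSize [Fintype V] (G : SimpleGraph V) (t : ℕ) : ℕ :=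
  (Finset.univ.filter fun s : Finset V => IsIndepFinset G s ∧ s.card = t).card

/-- `S_T`: the set of common neighbors of all vertices of `T`. -/
noncomputable def commonNbrs [Fintype V] (G : SimpleGraph V) (T : Finset V) : Finset V :=
  Finset.univ.filter fun v => ∀ x ∈ T, G.Adj x v

/-- The weight `w(C)` of a clique: the number of common neighbors of its vertices. -/
noncomputable def weight [Fintype V] (G : SimpleGraph V) (T : Finset V) : ℕ :=
  (commonNbrs G T).card

/-- A clique `T` is tight (for max degree bound `r`) if `w(T) = r + 1 - |T|`. -/
def IsTight [Fintype V] (r : ℕ) (G : SimpleGraph V) (T : Finset V) : Prop :=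
  G.IsClique (T : Set V) ∧ weight G T + T.card = r + 1

/-- A cluster is a maximal tight clique. -/
def IsCluster [Fintype V] (r : ℕ) (G : SimpleGraph V) (T : Finset V) : Prop :=
  IsTight r G T ∧ ∀ T' : Finset V, T ⊆ T' → IsTight r G T' → T' = T

/-- The graph `G_T`, obtained from `G` by adding all edges within `S_T` and deleting all
edges between `S_T` and `V(G) \ (T ∪ S_T)`. -/
noncomputable def modGraph [Fintype V] (G : SimpleGraph V) (T : Finset V) : SimpleGraph V :=
  SimpleGraph.fromRel fun u v =>
    (u ∈ commonNbrs G T ∧ v ∈ commonNbrs G T) ∨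
    (G.Adj u v ∧ ¬(u ∈ commonNbrs G T ∧ v ∉ T ∪ commonNbrs G T) ∧
      ¬(v ∈ commonNbrs G T ∧ u ∉ T ∪ commonNbrs G T))

/-- The graph `R_T`: the complement of the subgraph of `G` induced on `S_T`. -/
noncomputable def RT [Fintype V] (G : SimpleGraph V) (T : Finset V) :
    SimpleGraph ((commonNbrs G T : Finset V) : Set V) :=
  (SimpleGraph.induce ((commonNbrs G T : Finset V) : Set V) G)ᶜ

/-- `δ_I`: the minimum degree in `R` over the vertices of `I`. -/
noncomputable def minDegOn {W : Type*} [Fintype W] (R : SimpleGraph W) (I : Finset W) : ℕ :=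
  sInf ((fun x => R.degree x) '' (I : Set W))

/-- The fixed loss `φ(R) = Σ_{∅ ≠ I independent} (2 ^ δ_I - 1)`. -/
noncomputable def fixedLoss {W : Type*} [Fintype W] (R : SimpleGraph W) : ℕ :=
  ∑ I ∈ Finset.univ.filter (fun I : Finset W => I.Nonempty ∧ IsIndepFinset R I),
    (2 ^ minDegOn R I - 1)

/-- The disjoint union of `a` copies of `K_{r+1}` together with one copy of `K_b`. -/
noncomputable def kUnion (a r b : ℕ) : SimpleGraph ((Fin a × Fin (r + 1)) ⊕ Fin b) :=
  SimpleGraph.fromRel fun x y =>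
    match x, y with
    | Sum.inl (i, _), Sum.inl (j, _) => i = j
    | Sum.inr _, Sum.inr _ => True
    | _, _ => False

/-- The disjoint union of `a` copies of `K_3` together with one copy of the cycle `C_m`. -/
noncomputable def triCyc (a m : ℕ) : SimpleGraph ((Fin a × Fin 3) ⊕ Fin m) :=
  SimpleGraph.fromRel fun x y =>
    match x, y with
    | Sum.inl (i, _), Sum.inl (j, _) => i = j
    | Sum.inr u, Sum.inr v => (u.val + 1) % m = v.val
    | _, _ => False

end Paper

open Paper

section Helpers
variable {V : Type*} [Fintype V] {G : SimpleGraph V} {T : Finset V} {r : ℕ}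

lemma mem_commonNbrs' {v : V} : v ∈ commonNbrs G T ↔ ∀ x ∈ T, G.Adj x v := by
  simp [commonNbrs]

lemma disjoint_T_commonNbrs : Disjoint T (commonNbrs G T) := by
  rw [Finset.disjoint_left]
  intro v hvT hvS
  exact G.irrefl (mem_commonNbrs'.1 hvS v hvT)

lemma RT_adj {a b : ((commonNbrs G T : Finset V) : Set V)} :
    (RT G T).Adj a b ↔ a ≠ b ∧ ¬ G.Adj a b := by
  simp only [RT, SimpleGraph.compl_adj, SimpleGraph.induce, SimpleGraph.comap_adj,
    Function.Embedding.coe_subtype]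

lemma T_no_outside (hdeg : G.maxDegree ≤ r) (hT : IsTight r G T)
    {v y : V} (hv : v ∈ T) (hy : y ∉ T ∪ commonNbrs G T) : ¬ G.Adj v y := by
  intro hadj
  have hsub : insert y (T.erase v ∪ commonNbrs G T) ⊆ G.neighborFinset v := by
    intro z hz
    rw [Finset.mem_insert, Finset.mem_union] at hz
    rw [SimpleGraph.mem_neighborFinset]
    rcases hz with rfl | hz | hz
    · exact hadj
    · exact hT.1 (Finset.mem_coe.2 hv) (Finset.mem_coe.2 (Finset.mem_of_mem_erase hz))
        (Ne.symm (Finset.ne_of_mem_erase hz))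
    · exact mem_commonNbrs'.1 hz v hv
  have hynot : y ∉ T.erase v ∪ commonNbrs G T := by
    intro h
    rcases Finset.mem_union.1 h with h | h
    · exact hy (Finset.mem_union.2 (Or.inl (Finset.mem_of_mem_erase h)))
    · exact hy (Finset.mem_union.2 (Or.inr h))
  have hcard : (insert y (T.erase v ∪ commonNbrs G T)).card
      = (T.card - 1) + (commonNbrs G T).card + 1 := by
    rw [Finset.card_insert_of_notMem hynot,
      Finset.card_union_of_disjoint (disjoint_T_commonNbrs.mono_left (Finset.erase_subset _ _)),
      Finset.card_erase_of_mem hv]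
  have h1 : (insert y (T.erase v ∪ commonNbrs G T)).card ≤ G.degree v :=
    Finset.card_le_card hsub
  have h2 : G.degree v ≤ r := le_trans (G.degree_le_maxDegree v) hdeg
  have h3 : 1 ≤ T.card := Finset.card_pos.2 ⟨v, hv⟩
  have h4 := hT.2
  unfold weight at h4
  omega

lemma RT_degree_eq {x : V} (hx : x ∈ commonNbrs G T) :
    (RT G T).degree ⟨x, hx⟩
      + ((commonNbrs G T).filter (fun z => G.Adj x z)).card + 1
      = (commonNbrs G T).card := by
  have hb : (RT G T).degree ⟨x, hx⟩
      = ((commonNbrs G T).filter (fun z => z ≠ x ∧ ¬ G.Adj x z)).card := by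
    rw [SimpleGraph.degree]
    refine Finset.card_bij (fun a _ => (a : V)) ?_ ?_ ?_
    · intro a ha
      rw [SimpleGraph.mem_neighborFinset, RT_adj] at ha
      refine Finset.mem_filter.2 ⟨Finset.mem_coe.1 a.2, ?_, ha.2⟩
      intro h
      exact ha.1 (Subtype.ext h.symm)
    · intro a _ b _ h
      exact Subtype.ext h
    · intro z hz
      rw [Finset.mem_filter] at hz
      refine ⟨⟨z, Finset.mem_coe.2 hz.1⟩, ?_, rfl⟩
      rw [SimpleGraph.mem_neighborFinset, RT_adj]
      exact ⟨fun h => hz.2.1 (congrArg Subtype.val h).symm, hz.2.2⟩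
  have hsplit : ((commonNbrs G T).filter (fun z => G.Adj x z)).card
      + ((commonNbrs G T).filter (fun z => ¬ G.Adj x z)).card
      = (commonNbrs G T).card :=
    Finset.card_filter_add_card_filter_not _
  have hins : (commonNbrs G T).filter (fun z => ¬ G.Adj x z)
      = insert x ((commonNbrs G T).filter (fun z => z ≠ x ∧ ¬ G.Adj x z)) := by
    ext z
    simp only [Finset.mem_filter, Finset.mem_insert]
    constructor
    · rintro ⟨h1, h2⟩
      by_cases hzx : z = x
      · exact Or.inl hzx
      · exact Or.inr ⟨h1, hzx, h2⟩
    · rintro (rfl | ⟨h1, _, h3⟩)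
      · exact ⟨hx, G.irrefl⟩
      · exact ⟨h1, h3⟩
  have hxnot : x ∉ (commonNbrs G T).filter (fun z => z ≠ x ∧ ¬ G.Adj x z) := by
    simp
  rw [hb]
  rw [hins, Finset.card_insert_of_notMem hxnot] at hsplit
  omega

lemma Dx_le (hdeg : G.maxDegree ≤ r) (hT : IsTight r G T)
    {x : V} (hx : x ∈ commonNbrs G T) :
    ((G.neighborFinset x) \ (T ∪ commonNbrs G T)).card ≤ (RT G T).degree ⟨x, hx⟩ := by
  set A := (commonNbrs G T).filter (fun z => G.Adj x z) with hA
  set D := (G.neighborFinset x) \ (T ∪ commonNbrs G T) with hD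
  have hsub : T ∪ A ∪ D ⊆ G.neighborFinset x := by
    intro z hz
    rw [SimpleGraph.mem_neighborFinset]
    rcases Finset.mem_union.1 hz with hz | hz
    · rcases Finset.mem_union.1 hz with hz | hz
      · exact (mem_commonNbrs'.1 hx z hz).symm
      · exact (Finset.mem_filter.1 hz).2
    · have := (Finset.mem_sdiff.1 hz).1
      rwa [SimpleGraph.mem_neighborFinset] at this
  have hd1 : Disjoint T A :=
    disjoint_T_commonNbrs.mono_right (Finset.filter_subset _ _)
  have hd2 : Disjoint (T ∪ A) D := by
    refine Finset.disjoint_left.2 fun z hz hzD => ?_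
    have := (Finset.mem_sdiff.1 hzD).2
    rcases Finset.mem_union.1 hz with hz | hz
    · exact this (Finset.mem_union.2 (Or.inl hz))
    · exact this (Finset.mem_union.2 (Or.inr (Finset.mem_filter.1 hz).1))
  have hcard : T.card + A.card + D.card ≤ r := by
    have := Finset.card_le_card hsub
    rw [Finset.card_union_of_disjoint hd2, Finset.card_union_of_disjoint hd1] at this
    exact le_trans this (le_trans (G.degree_le_maxDegree x) hdeg)
  have hdeg2 := RT_degree_eq (G := G) (T := T) hx
  rw [← hA] at hdeg2
  have h4 := hT.2
  unfold weight at h4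
  omega

lemma modGraph_adj {u v : V} :
    (modGraph G T).Adj u v ↔ u ≠ v ∧
      ((u ∈ commonNbrs G T ∧ v ∈ commonNbrs G T) ∨
       (G.Adj u v ∧ ¬(u ∈ commonNbrs G T ∧ v ∉ T ∪ commonNbrs G T) ∧
         ¬(v ∈ commonNbrs G T ∧ u ∉ T ∪ commonNbrs G T))) := by
  rw [modGraph, SimpleGraph.fromRel_adj]
  constructor
  · rintro ⟨h, h2 | h2⟩
    · exact ⟨h, by rw [G.adj_comm] at h2 ⊢ <;> tauto⟩
    · exact ⟨h, by tauto⟩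
  · rintro ⟨h, h2⟩
    exact ⟨h, Or.inl h2⟩

lemma modGraph_clique_iff (hT : IsTight r G T) {C : Finset V} :
    (modGraph G T).IsClique (C : Set V) ↔
      C ⊆ T ∪ commonNbrs G T ∨ (G.IsClique (C : Set V) ∧ C ∩ commonNbrs G T = ∅) := by
  constructor
  · intro h
    by_cases hsub : C ⊆ T ∪ commonNbrs G T
    · exact Or.inl hsub
    right
    obtain ⟨y, hyC, hyTS⟩ := Finset.not_subset.1 hsub
    have hCS : C ∩ commonNbrs G T = ∅ := by
      by_contra hne
      obtain ⟨u, hu⟩ := Finset.nonempty_iff_ne_empty.2 hne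
      rw [Finset.mem_inter] at hu
      have huy : u ≠ y := by
        rintro rfl
        exact hyTS (Finset.mem_union.2 (Or.inr hu.2))
      have hadj := h (Finset.mem_coe.2 hu.1) (Finset.mem_coe.2 hyC) huy
      rw [modGraph_adj] at hadj
      rcases hadj.2 with h2 | h2
      · exact hyTS (Finset.mem_union.2 (Or.inr h2.2))
      · exact h2.2.1 ⟨hu.2, hyTS⟩
    refine ⟨fun a ha b hb hab => ?_, hCS⟩
    have hadj := h ha hb hab
    rw [modGraph_adj] at hadj
    have haS : a ∉ commonNbrs G T := by
      intro haS
      have : a ∈ C ∩ commonNbrs G T := Finset.mem_inter.2 ⟨Finset.mem_coe.1 ha, haS⟩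
      rw [hCS] at this
      exact absurd this (Finset.notMem_empty a)
    rcases hadj.2 with h2 | h2
    · exact absurd h2.1 haS
    · exact h2.1
  · rintro (hsub | ⟨hcl, hCS⟩)
    · intro a ha b hb hab
      rw [modGraph_adj]
      refine ⟨hab, ?_⟩
      have haTS := hsub (Finset.mem_coe.1 ha)
      have hbTS := hsub (Finset.mem_coe.1 hb)
      by_cases haS : a ∈ commonNbrs G T <;> by_cases hbS : b ∈ commonNbrs G T
      · exact Or.inl ⟨haS, hbS⟩
      · have hbT : b ∈ T := (Finset.mem_union.1 hbTS).resolve_right hbS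
        exact Or.inr ⟨(mem_commonNbrs'.1 haS b hbT).symm,
          fun hc => hc.2 hbTS, fun hc => absurd hc.1 hbS⟩
      · have haT : a ∈ T := (Finset.mem_union.1 haTS).resolve_right haS
        exact Or.inr ⟨mem_commonNbrs'.1 hbS a haT,
          fun hc => absurd hc.1 haS, fun hc => hc.2 haTS⟩
      · have haT : a ∈ T := (Finset.mem_union.1 haTS).resolve_right haS
        have hbT : b ∈ T := (Finset.mem_union.1 hbTS).resolve_right hbS
        exact Or.inr ⟨hT.1 (Finset.mem_coe.2 haT) (Finset.mem_coe.2 hbT) hab,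
          fun hc => absurd hc.1 haS, fun hc => absurd hc.1 hbS⟩
    · intro a ha b hb hab
      rw [modGraph_adj]
      have haS : a ∉ commonNbrs G T := fun haS => by
        have : a ∈ C ∩ commonNbrs G T := Finset.mem_inter.2 ⟨Finset.mem_coe.1 ha, haS⟩
        rw [hCS] at this
        exact absurd this (Finset.notMem_empty a)
      have hbS : b ∉ commonNbrs G T := fun hbS => by
        have : b ∈ C ∩ commonNbrs G T := Finset.mem_inter.2 ⟨Finset.mem_coe.1 hb, hbS⟩
        rw [hCS] at this
        exact absurd this (Finset.notMem_empty b)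
      exact ⟨hab, Or.inr ⟨hcl ha hb hab,
        fun hc => absurd hc.1 haS, fun hc => absurd hc.1 hbS⟩⟩

end Helpers


/-- Auxiliary: the subtype version of a subset of `S_T`. -/
noncomputable def iFun {V : Type*} [Fintype V] (G : SimpleGraph V) (T : Finset V)
    (J : Finset V) : Finset ((commonNbrs G T : Finset V) : Set V) :=
  Finset.univ.filter (fun a => (a : V) ∈ J)

lemma mem_iFun {V : Type*} [Fintype V] {G : SimpleGraph V} {T : Finset V} {J : Finset V}
    {a : ((commonNbrs G T : Finset V) : Set V)} : a ∈ iFun G T J ↔ (a : V) ∈ J := by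
  simp [iFun]

/-- **Lemma 4.3.** If `G` has `Δ(G) ≤ r` and `T` is a tight clique of size `t`, then
`k(G_T) ≥ k(G) + 2^{r+1} - 2^t * i(R_T) - φ(R_T)` (as integers). -/
theorem stmt10 {V : Type*} [Fintype V] (r t : ℕ) (G : SimpleGraph V) (hdeg : G.maxDegree ≤ r)
    (T : Finset V) (hT : IsTight r G T) (ht : T.card = t) :
    (cliqueCount G : ℤ) + 2 ^ (r + 1) - 2 ^ t * indepCount (RT G T) - fixedLoss (RT G T) ≤
      (cliqueCount (modGraph G T) : ℤ) := by
  classical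
  have hTcl := hT.1
  have hTw := hT.2
  unfold weight at hTw
  rw [ht] at hTw
  -- the two clique families
  set C0 : Finset (Finset V) :=
    univ.filter (fun C : Finset V => G.IsClique (C : Set V) ∧ C ∩ commonNbrs G T = ∅) with hC0def
  set C1 : Finset (Finset V) :=
    univ.filter (fun C : Finset V => G.IsClique (C : Set V) ∧ (C ∩ commonNbrs G T).Nonempty)
    with hC1def
  -- splitting the cliques of G
  have hsplitG : cliqueCount G = C0.card + C1.card := by
    have hs := Finset.card_filter_add_card_filter_not
      (s := univ.filter fun C : Finset V => G.IsClique (C : Set V))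
      (p := fun C => C ∩ commonNbrs G T = ∅)
    rw [Finset.filter_filter, Finset.filter_filter] at hs
    unfold cliqueCount
    rw [← hs, hC0def, hC1def]
    congr 1
    apply congrArg Finset.card
    apply Finset.filter_congr
    intro C _
    exact and_congr_right fun _ => Finset.nonempty_iff_ne_empty.symm
  have hTScard : (T ∪ commonNbrs G T).card = r + 1 := by
    rw [Finset.card_union_of_disjoint disjoint_T_commonNbrs, ht]
    omega
  -- counting the cliques of the modified graph
  have hmodset : (univ.filter fun C : Finset V => (modGraph G T).IsClique (C : Set V))
      = (T ∪ commonNbrs G T).powerset ∪ C0 := by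
    ext C
    rw [hC0def]
    simp only [Finset.mem_filter, Finset.mem_union, Finset.mem_powerset, Finset.mem_univ,
      true_and]
    exact modGraph_clique_iff hT
  have hinter : (T ∪ commonNbrs G T).powerset ∩ C0 = T.powerset := by
    ext C
    rw [hC0def]
    simp only [Finset.mem_inter, Finset.mem_powerset, Finset.mem_filter, Finset.mem_univ,
      true_and]
    constructor
    · rintro ⟨h1, _, h3⟩ v hv
      rcases Finset.mem_union.1 (h1 hv) with h | h
      · exact h
      · exfalso
        have hm : v ∈ C ∩ commonNbrs G T := Finset.mem_inter.2 ⟨hv, h⟩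
        rw [h3] at hm
        exact absurd hm (Finset.notMem_empty v)
    · intro h
      refine ⟨h.trans Finset.subset_union_left, hTcl.subset (Finset.coe_subset.2 h), ?_⟩
      rw [Finset.eq_empty_iff_forall_notMem]
      intro v hv
      rw [Finset.mem_inter] at hv
      exact Finset.disjoint_left.1 disjoint_T_commonNbrs (h hv.1) hv.2
  have hmod : cliqueCount (modGraph G T) + 2 ^ t = 2 ^ (r + 1) + C0.card := by
    have hcui := Finset.card_union_add_card_inter (T ∪ commonNbrs G T).powerset C0
    rw [hinter, Finset.card_powerset, Finset.card_powerset, hTScard, ht] at hcui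
    unfold cliqueCount
    rw [hmodset]
    exact hcui
  -- the fibering of C1 over nonempty cliques of G[S]
  set Jset : Finset (Finset V) :=
    univ.filter (fun J : Finset V =>
      J ⊆ commonNbrs G T ∧ J.Nonempty ∧ G.IsClique (J : Set V)) with hJdef
  have hfib : C1.card = ∑ J ∈ Jset, (C1.filter (fun C => C ∩ commonNbrs G T = J)).card := by
    apply Finset.card_eq_sum_card_fiberwise
    intro C hC
    rw [Finset.mem_coe, hC1def, Finset.mem_filter] at hC
    rw [Finset.mem_coe, hJdef, Finset.mem_filter]
    exact ⟨Finset.mem_univ _, Finset.inter_subset_right, hC.2.2,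
      hC.2.1.subset (Finset.coe_subset.2 Finset.inter_subset_left)⟩
  -- the per-fiber bound
  have hfibbound : ∀ J ∈ Jset,
      (C1.filter (fun C => C ∩ commonNbrs G T = J)).card
        ≤ 2 ^ t + (2 ^ (minDegOn (RT G T) (iFun G T J)) - 1) := by
    intro J hJm
    rw [hJdef, Finset.mem_filter] at hJm
    obtain ⟨-, hJS, hJne, hJcl⟩ := hJm
    -- a vertex of minimum RT-degree in J
    have hiFne : ((iFun G T J : Set ((commonNbrs G T : Finset V) : Set V))).Nonempty := by
      obtain ⟨v, hv⟩ := hJne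
      exact ⟨⟨v, Finset.mem_coe.2 (hJS hv)⟩, Finset.mem_coe.2 (mem_iFun.2 hv)⟩
    have himg : ((fun x => (RT G T).degree x) ''
        (iFun G T J : Set ((commonNbrs G T : Finset V) : Set V))).Nonempty := hiFne.image _
    obtain ⟨xh, hxhJ, hxhdeg⟩ := Nat.sInf_mem himg
    have hxJ : (xh : V) ∈ J := mem_iFun.1 (Finset.mem_coe.1 hxhJ)
    have hxS : (xh : V) ∈ commonNbrs G T := Finset.mem_coe.1 xh.2
    have hDle : ((G.neighborFinset (xh : V)) \ (T ∪ commonNbrs G T)).card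
        ≤ minDegOn (RT G T) (iFun G T J) := by
      have h1 := Dx_le hdeg hT hxS
      have h2 : (⟨(xh : V), hxS⟩ : ((commonNbrs G T : Finset V) : Set V)) = xh :=
        Subtype.ext rfl
      rw [h2] at h1
      exact h1.trans (le_of_eq hxhdeg)
    have hsplitf := Finset.card_filter_add_card_filter_not
      (s := C1.filter (fun C => C ∩ commonNbrs G T = J))
      (p := fun C => C ⊆ T ∪ commonNbrs G T)
    -- part 1 : cliques inside T ∪ S
    have hpart1 : ((C1.filter (fun C => C ∩ commonNbrs G T = J)).filter
        (fun C => C ⊆ T ∪ commonNbrs G T)).card ≤ 2 ^ t := by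
      have key : ∀ C ∈ (C1.filter (fun C => C ∩ commonNbrs G T = J)).filter
          (fun C => C ⊆ T ∪ commonNbrs G T), C = (C ∩ T) ∪ J := by
        intro C hC
        rw [Finset.mem_filter, Finset.mem_filter] at hC
        obtain ⟨⟨_, hCJ⟩, hCsub⟩ := hC
        ext v
        rw [Finset.mem_union, Finset.mem_inter]
        constructor
        · intro hv
          rcases Finset.mem_union.1 (hCsub hv) with h | h
          · exact Or.inl ⟨hv, h⟩
          · right
            rw [← hCJ]
            exact Finset.mem_inter.2 ⟨hv, h⟩
        · rintro (⟨h, _⟩ | h)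
          · exact h
          · rw [← hCJ] at h
            exact (Finset.mem_inter.1 h).1
      calc ((C1.filter (fun C => C ∩ commonNbrs G T = J)).filter
            (fun C => C ⊆ T ∪ commonNbrs G T)).card
          ≤ T.powerset.card := by
            apply Finset.card_le_card_of_injOn (fun C => C ∩ T)
            · intro C _
              exact Finset.mem_powerset.2 Finset.inter_subset_right
            · intro a ha b hb h
              have h' : a ∩ T = b ∩ T := h
              rw [key a (Finset.mem_coe.1 ha), key b (Finset.mem_coe.1 hb), h']
        _ = 2 ^ t := by rw [Finset.card_powerset, ht]
    -- part 2 : cliques reaching outside T ∪ S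
    have hpart2 : ((C1.filter (fun C => C ∩ commonNbrs G T = J)).filter
        (fun C => ¬ C ⊆ T ∪ commonNbrs G T)).card
          ≤ 2 ^ (minDegOn (RT G T) (iFun G T J)) - 1 := by
      have keyprops : ∀ C ∈ (C1.filter (fun C => C ∩ commonNbrs G T = J)).filter
          (fun C => ¬ C ⊆ T ∪ commonNbrs G T),
          C = J ∪ (C \ (T ∪ commonNbrs G T)) ∧
            (C \ (T ∪ commonNbrs G T)) ∈
              (((G.neighborFinset (xh : V)) \ (T ∪ commonNbrs G T)).powerset.erase ∅) := by
        intro C hC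
        rw [Finset.mem_filter, Finset.mem_filter, hC1def, Finset.mem_filter] at hC
        obtain ⟨⟨⟨-, hCcl, -⟩, hCJ⟩, hCnsub⟩ := hC
        obtain ⟨y, hyC, hyTS⟩ := Finset.not_subset.1 hCnsub
        have hCT : ∀ v ∈ C, v ∉ T := by
          intro v hvC hvT
          have hvy : v ≠ y := fun h => hyTS (h ▸ Finset.mem_union.2 (Or.inl hvT))
          exact T_no_outside hdeg hT hvT hyTS
            (hCcl (Finset.mem_coe.2 hvC) (Finset.mem_coe.2 hyC) hvy)
        have hBD : C \ (T ∪ commonNbrs G T)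
            ⊆ (G.neighborFinset (xh : V)) \ (T ∪ commonNbrs G T) := by
          intro z hz
          rw [Finset.mem_sdiff] at hz ⊢
          refine ⟨?_, hz.2⟩
          rw [SimpleGraph.mem_neighborFinset]
          have hxC : (xh : V) ∈ C := by
            have hm : (xh : V) ∈ C ∩ commonNbrs G T := by
              rw [hCJ]; exact hxJ
            exact (Finset.mem_inter.1 hm).1
          have hne : (xh : V) ≠ z := fun h => hz.2 (h ▸ Finset.mem_union.2 (Or.inr hxS))
          exact hCcl (Finset.mem_coe.2 hxC) (Finset.mem_coe.2 hz.1) hne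
        have hBne : (C \ (T ∪ commonNbrs G T)).Nonempty :=
          ⟨y, Finset.mem_sdiff.2 ⟨hyC, hyTS⟩⟩
        constructor
        · ext v
          rw [Finset.mem_union, Finset.mem_sdiff]
          constructor
          · intro hv
            by_cases hvTS : v ∈ T ∪ commonNbrs G T
            · left
              rcases Finset.mem_union.1 hvTS with h | h
              · exact absurd h (hCT v hv)
              · rw [← hCJ]
                exact Finset.mem_inter.2 ⟨hv, h⟩
            · exact Or.inr ⟨hv, hvTS⟩
          · rintro (h | ⟨h, _⟩)
            · rw [← hCJ] at h
              exact (Finset.mem_inter.1 h).1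
            · exact h
        · rw [Finset.mem_erase, Finset.mem_powerset]
          exact ⟨Finset.nonempty_iff_ne_empty.1 hBne, hBD⟩
      calc ((C1.filter (fun C => C ∩ commonNbrs G T = J)).filter
            (fun C => ¬ C ⊆ T ∪ commonNbrs G T)).card
          ≤ ((((G.neighborFinset (xh : V)) \ (T ∪ commonNbrs G T)).powerset.erase ∅)).card := by
            apply Finset.card_le_card_of_injOn (fun C => C \ (T ∪ commonNbrs G T))
            · intro C hC
              exact (keyprops C hC).2
            · intro a ha b hb h
              have h' : a \ (T ∪ commonNbrs G T) = b \ (T ∪ commonNbrs G T) := h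
              rw [(keyprops a (Finset.mem_coe.1 ha)).1, (keyprops b (Finset.mem_coe.1 hb)).1, h']
        _ = 2 ^ ((G.neighborFinset (xh : V)) \ (T ∪ commonNbrs G T)).card - 1 := by
            rw [Finset.card_erase_of_mem (Finset.mem_powerset.2 (Finset.empty_subset _)),
              Finset.card_powerset]
        _ ≤ 2 ^ (minDegOn (RT G T) (iFun G T J)) - 1 :=
            Nat.sub_le_sub_right (Nat.pow_le_pow_right (by norm_num) hDle) 1
    have h2pos : 1 ≤ 2 ^ (minDegOn (RT G T) (iFun G T J)) := Nat.one_le_two_pow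
    omega
  -- transfer the sum to independent sets of RT
  have hsumeq : (∑ J ∈ Jset, (2 ^ t + (2 ^ (minDegOn (RT G T) (iFun G T J)) - 1)))
      = ∑ I ∈ univ.filter (fun I : Finset ((commonNbrs G T : Finset V) : Set V) =>
            I.Nonempty ∧ IsIndepFinset (RT G T) I),
          (2 ^ t + (2 ^ (minDegOn (RT G T) I) - 1)) := by
    apply Finset.sum_nbij' (i := fun J => iFun G T J)
      (j := fun I => I.map (Function.Embedding.subtype _))
    · intro J hJm
      rw [hJdef, Finset.mem_filter] at hJm
      obtain ⟨-, hJS, hJne, hJcl⟩ := hJm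
      rw [Finset.mem_filter]
      refine ⟨Finset.mem_univ _, ?_, ?_⟩
      · obtain ⟨v, hv⟩ := hJne
        exact ⟨⟨v, Finset.mem_coe.2 (hJS hv)⟩, mem_iFun.2 hv⟩
      · intro a ha b hb hab
        rw [RT_adj]
        rintro ⟨-, hnadj⟩
        have haJ : (a : V) ∈ J := mem_iFun.1 (Finset.mem_coe.1 ha)
        have hbJ : (b : V) ∈ J := mem_iFun.1 (Finset.mem_coe.1 hb)
        have hvne : (a : V) ≠ (b : V) := fun h => hab (Subtype.ext h)
        exact hnadj (hJcl (Finset.mem_coe.2 haJ) (Finset.mem_coe.2 hbJ) hvne)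
    · intro I hIm
      rw [Finset.mem_filter] at hIm
      obtain ⟨-, hIne, hIind⟩ := hIm
      rw [hJdef, Finset.mem_filter]
      refine ⟨Finset.mem_univ _, ?_, hIne.map, ?_⟩
      · intro v hv
        obtain ⟨a, _, rfl⟩ := Finset.mem_map.1 hv
        exact Finset.mem_coe.1 a.2
      · intro u hu v hv huv
        obtain ⟨a, haI, rfl⟩ := Finset.mem_map.1 (Finset.mem_coe.1 hu)
        obtain ⟨b, hbI, rfl⟩ := Finset.mem_map.1 (Finset.mem_coe.1 hv)
        have hab : a ≠ b := fun h => huv (congrArg _ h)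
        have h2 : ¬ (RT G T).Adj a b := hIind (Finset.mem_coe.2 haI) (Finset.mem_coe.2 hbI) hab
        rw [RT_adj] at h2
        by_contra hnadj
        exact h2 ⟨hab, hnadj⟩
    · intro J hJm
      rw [hJdef, Finset.mem_filter] at hJm
      obtain ⟨-, hJS, -, -⟩ := hJm
      ext v
      simp only [Finset.mem_map, Function.Embedding.coe_subtype]
      constructor
      · rintro ⟨a, ha, rfl⟩
        exact mem_iFun.1 ha
      · intro hv
        exact ⟨⟨v, Finset.mem_coe.2 (hJS hv)⟩, mem_iFun.2 hv, rfl⟩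
    · intro I _
      ext a
      rw [mem_iFun]
      simp only [Finset.mem_map, Function.Embedding.coe_subtype]
      constructor
      · rintro ⟨b, hb, hba⟩
        rwa [← Subtype.ext hba]
      · intro ha
        exact ⟨a, ha, rfl⟩
    · intro J _
      rfl
  -- the count of independent sets
  have hIcard : indepCount (RT G T)
      = (univ.filter (fun I : Finset ((commonNbrs G T : Finset V) : Set V) =>
          I.Nonempty ∧ IsIndepFinset (RT G T) I)).card + 1 := by
    unfold indepCount
    have heq : (univ.filter (fun I : Finset ((commonNbrs G T : Finset V) : Set V) =>
          IsIndepFinset (RT G T) I))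
        = insert ∅ (univ.filter (fun I => I.Nonempty ∧ IsIndepFinset (RT G T) I)) := by
      ext I
      simp only [Finset.mem_filter, Finset.mem_insert, Finset.mem_univ, true_and]
      constructor
      · intro h
        rcases Finset.eq_empty_or_nonempty I with rfl | hne
        · exact Or.inl rfl
        · exact Or.inr ⟨hne, h⟩
      · rintro (rfl | ⟨-, h⟩)
        · intro a ha
          exact absurd ha (by simp)
        · exact h
    rw [heq, Finset.card_insert_of_notMem (by simp)]
  -- assembling the sum
  have hsum2 : (∑ I ∈ univ.filter (fun I : Finset ((commonNbrs G T : Finset V) : Set V) =>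
          I.Nonempty ∧ IsIndepFinset (RT G T) I),
        (2 ^ t + (2 ^ (minDegOn (RT G T) I) - 1)))
      = 2 ^ t * (univ.filter (fun I : Finset ((commonNbrs G T : Finset V) : Set V) =>
          I.Nonempty ∧ IsIndepFinset (RT G T) I)).card + fixedLoss (RT G T) := by
    rw [Finset.sum_add_distrib, Finset.sum_const, smul_eq_mul, mul_comm]
    rfl
  have hC1bound : C1.card
      ≤ 2 ^ t * (univ.filter (fun I : Finset ((commonNbrs G T : Finset V) : Set V) =>
          I.Nonempty ∧ IsIndepFinset (RT G T) I)).card + fixedLoss (RT G T) := by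
    rw [hfib, ← hsum2, ← hsumeq]
    exact Finset.sum_le_sum hfibbound
  have hkey : C1.card + 2 ^ t
      ≤ 2 ^ t * indepCount (RT G T) + fixedLoss (RT G T) := by
    rw [hIcard, Nat.mul_add, Nat.mul_one]
    linarith [hC1bound]
  -- final integer arithmetic
  have z1 : (cliqueCount (modGraph G T) : ℤ) + 2 ^ t = 2 ^ (r + 1) + C0.card := by
    exact_mod_cast hmod
  have z2 : (cliqueCount G : ℤ) = C0.card + C1.card := by exact_mod_cast hsplitG
  have z3 : (C1.card : ℤ) + 2 ^ t
      ≤ 2 ^ t * indepCount (RT G T) + fixedLoss (RT G T) := by exact_mod_cast hkey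
  linarith [z1, z2, z3]
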